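/- Let E be a finite-dimensional real inner product space, p ∈ E, and let ψ₀, ψ₁, ψ₂ : E → ℂ be twice continuously differentiable on a neighborhood of p. Assume: (i) ψ_k(p) = 0 for k = 0, 1, 2; (ii) Dψ₀(p) + Dψ₁(p) + Dψ₂(p) = 0, where Dψ_k(p) denotes the Fréchet derivative at p; (iii) Im ψ_k(q) ≥ 0 for all q in a neighborhood of p and each k = 0, 1, 2; (iv) there exist linearly independent vectors v₀, v₂ ∈ E such that for k ∈ {0, 2} the Hessian quadratic form X ↦ D²(Im ψ_k)(p)[X, X] is strictly positive for every X ∈ E not in the real span of v_k. Then S := ψ₀ + ψ₁ + ψ₂ satisfies: (1) S(p) = 0; (2) DS(p) = 0; (3) there exist a constant c > 0 and a neighborhood U of p such that Im S(q) ≥ c ‖q − p‖² for all q ∈ U. -/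

import Mathlib

open Filter Topology

lemma quad_hasFDerivAt {E : Type*} [NormedAddCommGroup E] [NormedSpace ℝ E]
    (B : E →L[ℝ] E →L[ℝ] ℝ) (p x : E) :
    HasFDerivAt (fun y => B (y - p) (y - p)) (B (x - p) + B.flip (x - p)) x := by
  have h1 : HasFDerivAt (fun y : E => (y - p, y - p))
      ((ContinuousLinearMap.id ℝ E).prod (ContinuousLinearMap.id ℝ E)) x :=
    ((hasFDerivAt_id x).sub_const p).prodMk ((hasFDerivAt_id x).sub_const p)
  have h2 := (B.isBoundedBilinearMap.hasFDerivAt (x - p, x - p)).comp x h1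
  convert h2 using 1
  · rfl
  · rfl
  · rfl
  · ext v; simp [IsBoundedBilinearMap.deriv]

lemma taylor2 {E : Type*} [NormedAddCommGroup E] [NormedSpace ℝ E]
    {f : E → ℝ} {p : E} (hf : ContDiffAt ℝ 2 f p) {ε : ℝ} (hε : 0 < ε) :
    ∀ᶠ q in 𝓝 p, |f q - f p - fderiv ℝ f p (q - p) -
      2⁻¹ * fderiv ℝ (fderiv ℝ f) p (q - p) (q - p)| ≤ ε * ‖q - p‖ ^ 2 := by
  set g := fderiv ℝ f with hgdef
  set B := fderiv ℝ g p with hBdef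
  have hsymm : ∀ v w, B v w = B w v := hf.isSymmSndFDerivAt (by simp [minSmoothness_of_isRCLikeNormedField])
  have hBflip : ∀ x : E, B.flip x = B x := by
    intro x; ext v; exact hsymm v x
  have hgd : DifferentiableAt ℝ g p :=
    (hf.fderiv_right (m := 1) (by norm_num)).differentiableAt one_ne_zero
  have hlo : ∀ᶠ x in 𝓝 p, ‖g x - g p - B (x - p)‖ ≤ ε * ‖x - p‖ := by
    have h := Asymptotics.isLittleO_iff.1 hgd.hasFDerivAt.isLittleO hε
    filter_upwards [h] with x hx using by simpa using hx
  have hev : ∀ᶠ x in 𝓝 p, HasFDerivAt f (g x) x := by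
    filter_upwards [hf.eventually (by norm_num)] with x hx
    exact (hx.differentiableAt two_ne_zero).hasFDerivAt
  obtain ⟨δ, hδ, hball⟩ := Metric.eventually_nhds_iff_ball.1 (hlo.and hev)
  rw [Metric.eventually_nhds_iff_ball]
  refine ⟨δ, hδ, fun q hq => ?_⟩
  set φ : E → ℝ := fun y => f y - g p (y - p) - 2⁻¹ * B (y - p) (y - p) with hφ
  set φ' : E → E →L[ℝ] ℝ := fun x => g x - g p - B (x - p) with hφ'
  have hseg : segment ℝ p q ⊆ Metric.ball p δ :=
    (convex_ball p δ).segment_subset (Metric.mem_ball_self hδ) hq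
  have hder : ∀ x ∈ segment ℝ p q, HasFDerivWithinAt φ (φ' x) (segment ℝ p q) x := by
    intro x hx
    have hx' := hball x (hseg hx)
    have h3 : HasFDerivAt (fun y => (g p) (y - p)) (g p) x := by
      simpa [Function.comp_def] using
        ((g p).hasFDerivAt (x := x - p)).comp x ((hasFDerivAt_id x).sub_const p)
    have h4 : HasFDerivAt (fun y => 2⁻¹ * B (y - p) (y - p))
        ((2⁻¹ : ℝ) • (B (x - p) + B.flip (x - p))) x :=
      (quad_hasFDerivAt B p x).const_mul 2⁻¹
    have h5 := (hx'.2.sub h3).sub h4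
    have : φ' x = g x - g p - (2⁻¹ : ℝ) • (B (x - p) + B.flip (x - p)) := by
      rw [hBflip]
      ext v
      simp [hφ']
      ring
    rw [this]
    exact h5.hasFDerivWithinAt
  have hbound : ∀ x ∈ segment ℝ p q, ‖φ' x‖ ≤ ε * ‖q - p‖ := by
    intro x hx
    refine le_trans (hball x (hseg hx)).1 ?_
    have : ‖x - p‖ ≤ ‖q - p‖ := by
      rw [segment_eq_image'] at hx
      obtain ⟨t, ht, rfl⟩ := hx
      simp only [add_sub_cancel_left, norm_smul, Real.norm_eq_abs,
        abs_of_nonneg ht.1]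
      exact mul_le_of_le_one_left (norm_nonneg _) ht.2
    exact mul_le_mul_of_nonneg_left this hε.le
  have key := Convex.norm_image_sub_le_of_norm_hasFDerivWithin_le hder hbound
    (convex_segment p q) (left_mem_segment ℝ p q) (right_mem_segment ℝ p q)
  have h1 : φ q - φ p = f q - f p - (g p) (q - p) - 2⁻¹ * (B (q - p)) (q - p) := by
    simp [hφ]; ring
  rw [h1, Real.norm_eq_abs] at key
  calc |f q - f p - (g p) (q - p) - 2⁻¹ * (B (q - p)) (q - p)|
      ≤ ε * ‖q - p‖ * ‖q - p‖ := key
    _ = ε * ‖q - p‖ ^ 2 := by ring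

lemma hess_nonneg {E : Type*} [NormedAddCommGroup E] [NormedSpace ℝ E]
    {f : E → ℝ} {p : E} (hf : ContDiffAt ℝ 2 f p)
    (hmin : ∀ᶠ q in 𝓝 p, f p ≤ f q) (X : E) :
    0 ≤ fderiv ℝ (fderiv ℝ f) p X X := by
  by_contra hcon
  push_neg at hcon
  set B := fderiv ℝ (fderiv ℝ f) p with hB
  set a := (B X) X with ha
  have hX : X ≠ 0 := by
    rintro rfl
    simp [ha] at hcon
  have hnX : 0 < ‖X‖ := norm_pos_iff.2 hX
  have hgrad0 : fderiv ℝ f p = 0 := IsLocalMin.fderiv_eq_zero hmin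
  have hε : 0 < -a / (4 * ‖X‖ ^ 2) := div_pos (by linarith) (by positivity)
  obtain ⟨δ, hδ, hb⟩ := Metric.eventually_nhds_iff_ball.1 ((taylor2 hf hε).and hmin)
  set t := δ / (2 * ‖X‖) with htdef
  have ht : 0 < t := div_pos hδ (by positivity)
  have htX : t * ‖X‖ = δ / 2 := by rw [htdef]; field_simp
  set q := p + t • X with hq
  have hqp : q - p = t • X := by simp [hq]
  have hqb : q ∈ Metric.ball p δ := by
    rw [Metric.mem_ball, dist_eq_norm, hqp, norm_smul, Real.norm_eq_abs, abs_of_pos ht, htX]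
    linarith
  obtain ⟨h1, h2⟩ := hb q hqb
  rw [hqp, hgrad0] at h1
  have hBt : (B (t • X)) (t • X) = t ^ 2 * a := by
    simp [map_smul, smul_eq_mul, ha]
    ring
  have hns : ‖t • X‖ ^ 2 = t ^ 2 * ‖X‖ ^ 2 := by
    rw [norm_smul, Real.norm_eq_abs, mul_pow, sq_abs]
  rw [hBt, hns] at h1
  simp only [ContinuousLinearMap.zero_apply, sub_zero] at h1
  have habs := (abs_le.1 h1).2
  have hXX : -a / (4 * ‖X‖ ^ 2) * (t ^ 2 * ‖X‖ ^ 2) = -a / 4 * t ^ 2 := by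
    field_simp
  rw [hXX] at habs
  have ht2 : 0 < t ^ 2 := by positivity
  nlinarith [h2]

set_option maxHeartbeats 1000000 in
theorem stmt_4 (E : Type*) [NormedAddCommGroup E] [InnerProductSpace ℝ E]
    [FiniteDimensional ℝ E] (p : E) (ψ0 ψ1 ψ2 : E → ℂ)
    (hreg0 : ContDiffAt ℝ 2 ψ0 p) (hreg1 : ContDiffAt ℝ 2 ψ1 p)
    (hreg2 : ContDiffAt ℝ 2 ψ2 p)
    (hval0 : ψ0 p = 0) (hval1 : ψ1 p = 0) (hval2 : ψ2 p = 0)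
    (hgrad : fderiv ℝ ψ0 p + fderiv ℝ ψ1 p + fderiv ℝ ψ2 p = 0)
    (him0 : ∀ᶠ q in 𝓝 p, 0 ≤ (ψ0 q).im)
    (him1 : ∀ᶠ q in 𝓝 p, 0 ≤ (ψ1 q).im)
    (him2 : ∀ᶠ q in 𝓝 p, 0 ≤ (ψ2 q).im)
    (v0 v2 : E) (hv : LinearIndependent ℝ ![v0, v2])
    (hHess0 : ∀ X : E, X ∉ Submodule.span ℝ {v0} →
      0 < iteratedFDeriv ℝ 2 (fun q => (ψ0 q).im) p ![X, X])
    (hHess2 : ∀ X : E, X ∉ Submodule.span ℝ {v2} →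
      0 < iteratedFDeriv ℝ 2 (fun q => (ψ2 q).im) p ![X, X]) :
    (fun q => ψ0 q + ψ1 q + ψ2 q) p = 0 ∧
    fderiv ℝ (fun q => ψ0 q + ψ1 q + ψ2 q) p = 0 ∧
    ∃ c : ℝ, 0 < c ∧ ∀ᶠ q in 𝓝 p,
      c * ‖q - p‖ ^ 2 ≤ ((fun q => ψ0 q + ψ1 q + ψ2 q) q).im := by
  have d0 := hreg0.differentiableAt two_ne_zero
  have d1 := hreg1.differentiableAt two_ne_zero
  have d2 := hreg2.differentiableAt two_ne_zero
  refine ⟨by simp [hval0, hval1, hval2], ?_, ?_⟩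
  · rw [fderiv_fun_add (d0.fun_add d1) d2, fderiv_fun_add d0 d1]
    exact hgrad
  -- set up the real parts
  set f0 : E → ℝ := fun q => (ψ0 q).im with hf0def
  set f2 : E → ℝ := fun q => (ψ2 q).im with hf2def
  set f : E → ℝ := fun q => f0 q + f2 q with hfdef
  have hf0 : ContDiffAt ℝ 2 f0 p := Complex.imCLM.contDiff.contDiffAt.comp p hreg0
  have hf2 : ContDiffAt ℝ 2 f2 p := Complex.imCLM.contDiff.contDiffAt.comp p hreg2
  have hfc : ContDiffAt ℝ 2 f p := hf0.add hf2
  have hf0p : f0 p = 0 := by simp [hf0def, hval0]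
  have hf2p : f2 p = 0 := by simp [hf2def, hval2]
  have hfp : f p = 0 := by simp [hfdef, hf0p, hf2p]
  have hmin0 : ∀ᶠ q in 𝓝 p, f0 p ≤ f0 q := by
    filter_upwards [him0] with q hq; rw [hf0p]; exact hq
  have hmin2 : ∀ᶠ q in 𝓝 p, f2 p ≤ f2 q := by
    filter_upwards [him2] with q hq; rw [hf2p]; exact hq
  have hminf : ∀ᶠ q in 𝓝 p, f p ≤ f q := by
    filter_upwards [him0, him2] with q h0 h2
    rw [hfp]; exact add_nonneg h0 h2
  have hgradf : fderiv ℝ f p = 0 := IsLocalMin.fderiv_eq_zero hminf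
  -- Hessians
  set B0 := fderiv ℝ (fderiv ℝ f0) p with hB0def
  set B2 := fderiv ℝ (fderiv ℝ f2) p with hB2def
  set Bf := fderiv ℝ (fderiv ℝ f) p with hBfdef
  have hsplit : Bf = B0 + B2 := by
    have heq : fderiv ℝ f =ᶠ[𝓝 p] fun x => fderiv ℝ f0 x + fderiv ℝ f2 x := by
      filter_upwards [hf0.eventually (by norm_num), hf2.eventually (by norm_num)] with x h0 h2
      exact fderiv_add (h0.differentiableAt two_ne_zero) (h2.differentiableAt two_ne_zero)
    have hd0 : DifferentiableAt ℝ (fderiv ℝ f0) p :=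
      (hf0.fderiv_right (m := 1) (by norm_num)).differentiableAt one_ne_zero
    have hd2 : DifferentiableAt ℝ (fderiv ℝ f2) p :=
      (hf2.fderiv_right (m := 1) (by norm_num)).differentiableAt one_ne_zero
    rw [hBfdef, heq.fderiv_eq, fderiv_fun_add hd0 hd2]
  have h0nn : ∀ X : E, 0 ≤ B0 X X := fun X => hess_nonneg hf0 hmin0 X
  have h2nn : ∀ X : E, 0 ≤ B2 X X := fun X => hess_nonneg hf2 hmin2 X
  have hpos0 : ∀ X : E, X ∉ Submodule.span ℝ {v0} → 0 < B0 X X := by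
    intro X hX
    have := hHess0 X hX
    rwa [iteratedFDeriv_two_apply] at this
  have hpos2 : ∀ X : E, X ∉ Submodule.span ℝ {v2} → 0 < B2 X X := by
    intro X hX
    have := hHess2 X hX
    rwa [iteratedFDeriv_two_apply] at this
  have hposdef : ∀ X : E, X ≠ 0 → 0 < Bf X X := by
    intro X hX
    rw [hsplit]
    simp only [ContinuousLinearMap.add_apply]
    by_cases h : X ∈ Submodule.span ℝ {v0}
    · have h2' : X ∉ Submodule.span ℝ {v2} := by
        intro hmem2
        obtain ⟨a, ha⟩ := Submodule.mem_span_singleton.1 h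
        obtain ⟨b, hb⟩ := Submodule.mem_span_singleton.1 hmem2
        have hz : a • v0 + (-b) • v2 = 0 := by rw [neg_smul, ha, hb]; simp
        have := (LinearIndependent.pair_iff.1 hv a (-b) hz).1
        apply hX
        rw [← ha, this, zero_smul]
      have := hpos2 X h2'
      linarith [h0nn X]
    · have := hpos0 X h
      linarith [h2nn X]
  -- minimum on the sphere
  have hv0ne : v0 ≠ 0 := by
    have := hv.ne_zero 0
    simpa using this
  haveI : Nontrivial E := nontrivial_of_ne v0 0 hv0ne
  have hQcont : Continuous fun X : E => Bf X X :=
    Bf.isBoundedBilinearMap.continuous.comp (continuous_id.prodMk continuous_id)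
  obtain ⟨X₀, hX₀s, hX₀min⟩ := (isCompact_sphere (0 : E) 1).exists_isMinOn
    (NormedSpace.sphere_nonempty.2 zero_le_one) hQcont.continuousOn
  set lam := Bf X₀ X₀ with hlamdef
  have hX₀ne : X₀ ≠ 0 := by
    rw [mem_sphere_zero_iff_norm] at hX₀s
    intro h; rw [h, norm_zero] at hX₀s; norm_num at hX₀s
  have hlam : 0 < lam := hposdef X₀ hX₀ne
  have hlow : ∀ u : E, lam * ‖u‖ ^ 2 ≤ Bf u u := by
    intro u
    rcases eq_or_ne u 0 with rfl | hu
    · simp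
    · have hnu : 0 < ‖u‖ := norm_pos_iff.2 hu
      have hXs : (‖u‖⁻¹ • u) ∈ Metric.sphere (0 : E) 1 := by
        rw [mem_sphere_zero_iff_norm, norm_smul, Real.norm_eq_abs, abs_of_pos (by positivity),
          inv_mul_cancel₀ hnu.ne']
      have hm : lam ≤ Bf (‖u‖⁻¹ • u) (‖u‖⁻¹ • u) := hX₀min hXs
      have hsc : Bf (‖u‖⁻¹ • u) (‖u‖⁻¹ • u) = ‖u‖⁻¹ ^ 2 * Bf u u := by
        simp [map_smul, smul_eq_mul]
        ring
      rw [hsc] at hm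
      have h1 : lam * ‖u‖ ^ 2 ≤ (‖u‖⁻¹ ^ 2 * Bf u u) * ‖u‖ ^ 2 :=
        mul_le_mul_of_nonneg_right hm (by positivity)
      calc lam * ‖u‖ ^ 2 ≤ (‖u‖⁻¹ ^ 2 * Bf u u) * ‖u‖ ^ 2 := h1
        _ = Bf u u := by field_simp
  refine ⟨lam / 4, by linarith, ?_⟩
  filter_upwards [taylor2 hfc (show (0:ℝ) < lam / 4 by linarith), him1] with q hq h1q
  rw [hfp, hgradf] at hq
  simp only [ContinuousLinearMap.zero_apply, sub_zero] at hq
  have hlo := (abs_le.1 hq).1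
  have hBgeq := hlow (q - p)
  have hfq : lam / 4 * ‖q - p‖ ^ 2 ≤ f q := by linarith
  have him : ((ψ0 q + ψ1 q + ψ2 q)).im = f q + (ψ1 q).im := by
    simp [hfdef, hf0def, hf2def, Complex.add_im]
    ring
  rw [him]
  linarith
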